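/- Let p be a prime and t ≥ 1, n ≥ K ≥ 1 integers. Then Φ(n,K,p^t) ≤ p^{t−1}·Φ(n,K,p); that is, the maximum minimum Lee distance over rank-K linear codes of length n over ℤ_{p^t} is at most p^{t−1} times the maximum minimum Lee distance over K-dimensional linear codes of length n over ℤ_p. -/

import Mathlib

/-- Lee weight of an element of `ZMod q`. -/
noncomputable def leeWt {q : ℕ} (a : ZMod q) : ℕ := min (ZMod.val a) (q - ZMod.val a)

/-- Lee weight of a vector over `ZMod q`. -/
noncomputable def leeWtVec {q n : ℕ} (x : Fin n → ZMod q) : ℕ := ∑ i, leeWt (x i)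

/-- Minimum Lee distance (= minimum Lee weight of a nonzero codeword) of a linear code. -/
noncomputable def minLee {q n : ℕ} (C : Submodule (ZMod q) (Fin n → ZMod q)) : ℕ :=
  sInf {w | ∃ x ∈ C, x ≠ 0 ∧ leeWtVec x = w}

/-- Minimum Hamming distance (= minimum Hamming weight of a nonzero codeword). -/
noncomputable def minHam {q n : ℕ} (C : Submodule (ZMod q) (Fin n → ZMod q)) : ℕ :=
  sInf {w | ∃ x ∈ C, x ≠ 0 ∧ hammingNorm x = w}

/-- Average nonzero Lee weight of `ZMod q`. -/
noncomputable def mu (q : ℕ) : ℚ :=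
  if Even q then (q : ℚ)^2 / (4 * ((q : ℚ) - 1)) else ((q : ℚ) + 1) / 4

/-- `Phi n k p`: the maximum minimum Lee distance over `k`-dimensional linear codes
of length `n` over `ZMod p`. -/
noncomputable def Phi (n k p : ℕ) : ℕ :=
  sSup {d | ∃ C : Submodule (ZMod p) (Fin n → ZMod p),
    Module.finrank (ZMod p) ↥C = k ∧ minLee C = d}

/-- Rank of a linear code over `ZMod q`: minimal number of generators. -/
noncomputable def codeRank {q n : ℕ} (C : Submodule (ZMod q) (Fin n → ZMod q)) : ℕ :=
  sInf {m | ∃ s : Finset (Fin n → ZMod q), s.card = m ∧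
    Submodule.span (ZMod q) (↑s : Set (Fin n → ZMod q)) = C}

/-- `PhiR n K q`: the maximum minimum Lee distance over rank-`K` linear codes of
length `n` over `ZMod q`. -/
noncomputable def PhiR (n K q : ℕ) : ℕ :=
  sSup {d | ∃ C : Submodule (ZMod q) (Fin n → ZMod q), codeRank C = K ∧ minLee C = d}

section Psi
variable (p s : ℕ)

/-- The map `ZMod p → ZMod (p^(s+1))`, `a ↦ p^s * a.val`. -/
noncomputable def psiAux (a : ZMod p) : ZMod (p ^ (s + 1)) := ((p ^ s * a.val : ℕ) : ZMod (p ^ (s + 1)))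

variable {p}

lemma psi_congr {a b : ℕ} (h : a ≡ b [MOD p]) :
    ((p ^ s * a : ℕ) : ZMod (p ^ (s + 1))) = ((p ^ s * b : ℕ) : ZMod (p ^ (s + 1))) := by
  rw [ZMod.natCast_eq_natCast_iff]
  simpa [pow_succ] using Nat.ModEq.mul_left' (c := p ^ s) h

variable (hp : p.Prime)
include hp

lemma psi_add (a b : ZMod p) : psiAux p s (a + b) = psiAux p s a + psiAux p s b := by
  haveI : NeZero p := ⟨hp.ne_zero⟩
  have h : (a + b).val ≡ a.val + b.val [MOD p] := by
    rw [ZMod.val_add]; exact (Nat.mod_modEq _ _)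
  unfold psiAux
  rw [psi_congr s h]
  push_cast [Nat.mul_add]
  ring

lemma psi_smul (c a : ZMod p) : psiAux p s (c * a) = ((c.val : ZMod (p ^ (s+1)))) * psiAux p s a := by
  haveI : NeZero p := ⟨hp.ne_zero⟩
  have h : (c * a).val ≡ c.val * a.val [MOD p] := by
    rw [ZMod.val_mul]; exact (Nat.mod_modEq _ _)
  unfold psiAux
  rw [psi_congr s h]
  push_cast [mul_comm, mul_assoc, mul_left_comm]
  ring

lemma psi_val (a : ZMod p) : (psiAux p s a).val = p ^ s * a.val := by
  haveI : NeZero p := ⟨hp.ne_zero⟩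
  haveI : NeZero (p ^ (s+1)) := ⟨pow_ne_zero _ hp.ne_zero⟩
  apply ZMod.val_cast_of_lt
  calc p ^ s * a.val < p ^ s * p :=
        Nat.mul_lt_mul_of_pos_left (ZMod.val_lt a) (Nat.pow_pos hp.pos)
    _ = p ^ (s+1) := (pow_succ p s).symm

lemma psi_inj {a b : ZMod p} (h : psiAux p s a = psiAux p s b) : a = b := by
  haveI : NeZero p := ⟨hp.ne_zero⟩
  have := congrArg ZMod.val h
  rw [psi_val s hp, psi_val s hp] at this
  have hv : a.val = b.val := Nat.eq_of_mul_eq_mul_left (Nat.pow_pos hp.pos) this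
  exact ZMod.val_injective _ hv

lemma psi_zero : psiAux p s (0 : ZMod p) = 0 := by
  haveI : NeZero p := ⟨hp.ne_zero⟩
  unfold psiAux; simp

lemma psi_lee (a : ZMod p) : leeWt (psiAux p s a) = p ^ s * leeWt a := by
  haveI : NeZero p := ⟨hp.ne_zero⟩
  unfold leeWt
  rw [psi_val s hp]
  have h1 : p ^ (s+1) - p ^ s * a.val = p ^ s * (p - a.val) := by
    rw [Nat.mul_sub, ← pow_succ]
  rw [h1]
  rcases le_total a.val (p - a.val) with h | h
  · rw [min_eq_left h, min_eq_left (Nat.mul_le_mul_left _ h)]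
  · rw [min_eq_right h, min_eq_right (Nat.mul_le_mul_left _ h)]

lemma psi_smul_p (a : ZMod p) : (p : ZMod (p ^ (s+1))) * psiAux p s a = 0 := by
  unfold psiAux
  have : (p : ZMod (p ^ (s+1))) * ((p ^ s * a.val : ℕ) : ZMod (p ^ (s+1)))
      = ((p ^ (s+1) * a.val : ℕ) : ZMod (p ^ (s+1))) := by push_cast; ring
  rw [this, Nat.cast_mul, ZMod.natCast_self, zero_mul]

end Psi

/-- Nakayama-type lemma for nilpotent scalar. -/
lemma nak {R M : Type*} [CommRing R] [AddCommGroup M] [Module R M] (r : R) (tt : ℕ)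
    (hr : r ^ tt = 0) (C N : Submodule R M) (hNC : N ≤ C)
    (h : C ≤ N ⊔ Submodule.map (LinearMap.lsmul R M r) C) : C ≤ N := by
  have key : ∀ j, ∀ c ∈ C, ∃ a ∈ N, ∃ c' ∈ C, c = a + r ^ j • c' := by
    intro j
    induction j with
    | zero => exact fun c hc => ⟨0, N.zero_mem, c, hc, by simp⟩
    | succ j ih =>
      intro c hc
      obtain ⟨a, ha, c', hc', rfl⟩ := ih c hc
      obtain ⟨b, hb, y, hy, hby⟩ := Submodule.mem_sup.mp (h hc')
      obtain ⟨c'', hc'', rfl⟩ := Submodule.mem_map.mp hy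
      refine ⟨a + r ^ j • b, add_mem ha (N.smul_mem _ hb), c'', hc'', ?_⟩
      rw [← hby]
      simp only [LinearMap.lsmul_apply, smul_add, smul_smul, pow_succ]
      abel
  intro c hc
  obtain ⟨a, ha, c', hc', rfl⟩ := key tt c hc
  rw [hr, zero_smul, add_zero]
  exact ha

/-- Decomposition of difference of lifted values. -/
lemma coeff_dec {p : ℕ} (s : ℕ) (hp : p.Prime) (x y : ZMod p) :
    ∃ z : ZMod (p ^ (s+1)), (x.val : ZMod (p ^ (s+1))) - (y.val : ZMod (p ^ (s+1)))
      = ((x - y).val : ZMod (p ^ (s+1))) + p * z := by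
  haveI : NeZero p := ⟨hp.ne_zero⟩
  have hdvd : (p : ℤ) ∣ ((x.val : ℤ) - y.val - (x - y).val) := by
    have h0 : (((x.val : ℤ) - y.val - (x - y).val : ℤ) : ZMod p) = 0 := by
      push_cast
      simp only [ZMod.natCast_val, ZMod.cast_id]
      ring
    exact_mod_cast (ZMod.intCast_zmod_eq_zero_iff_dvd _ p).mp h0
  obtain ⟨k, hk⟩ := hdvd
  refine ⟨((k : ℤ) : ZMod (p ^ (s+1))), ?_⟩
  have h2 := congrArg (fun z : ℤ => (z : ZMod (p ^ (s+1)))) hk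
  push_cast at h2
  linear_combination h2

/-- The torsion code: preimage of `C` under `psiAux` applied coordinatewise. -/
noncomputable def torCode (p s n : ℕ) (hp : p.Prime)
    (C : Submodule (ZMod (p ^ (s+1))) (Fin n → ZMod (p ^ (s+1)))) :
    Submodule (ZMod p) (Fin n → ZMod p) where
  carrier := {v | (fun i => psiAux p s (v i)) ∈ C}
  zero_mem' := by
    have h : (fun i : Fin n => psiAux p s ((0 : Fin n → ZMod p) i)) = 0 := by
      funext i; simpa using psi_zero s hp
    simp only [Set.mem_setOf_eq, h]
    exact C.zero_mem
  add_mem' := by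
    intro v w hv hw
    simp only [Set.mem_setOf_eq] at *
    have h : (fun i => psiAux p s ((v + w) i))
        = (fun i => psiAux p s (v i)) + (fun i => psiAux p s (w i)) := by
      funext i; simp [psi_add s hp]
    rw [h]; exact C.add_mem hv hw
  smul_mem' := by
    intro c v hv
    simp only [Set.mem_setOf_eq] at *
    have h : (fun i => psiAux p s ((c • v) i))
        = (c.val : ZMod (p ^ (s+1))) • (fun i => psiAux p s (v i)) := by
      funext i
      simp only [Pi.smul_apply, smul_eq_mul]
      rw [psi_smul s hp]
    rw [h]; exact C.smul_mem _ hv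

lemma mem_torCode {p s n : ℕ} {hp : p.Prime}
    {C : Submodule (ZMod (p ^ (s+1))) (Fin n → ZMod (p ^ (s+1)))} {v : Fin n → ZMod p} :
    v ∈ torCode p s n hp C ↔ (fun i => psiAux p s (v i)) ∈ C := Iff.rfl

set_option maxHeartbeats 1000000 in
lemma codeRank_le_finrank_tor (p s n : ℕ) (hp : p.Prime)
    (C : Submodule (ZMod (p ^ (s+1))) (Fin n → ZMod (p ^ (s+1)))) :
    codeRank C ≤ Module.finrank (ZMod p) ↥(torCode p s n hp C) := by
  classical
  haveI : Fact p.Prime := ⟨hp⟩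
  haveI : NeZero p := ⟨hp.ne_zero⟩
  haveI : NeZero (p ^ (s+1)) := ⟨pow_ne_zero _ hp.ne_zero⟩
  set R := ZMod (p ^ (s+1)) with hR
  set M := (Fin n → R) with hM
  set T := torCode p s n hp C with hT
  set φ : M →ₗ[R] M := LinearMap.lsmul R M (p : R) with hφ
  set f : ↥C →ₗ[R] M := φ.comp C.subtype with hf
  set pC : Submodule R M := Submodule.map φ C with hpC
  have hpCle : pC ≤ C := by
    intro y hy
    obtain ⟨x, hx, rfl⟩ := Submodule.mem_map.mp hy
    exact C.smul_mem _ hx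
  -- the equivalence T ≃ ker f
  have hgmem : ∀ v : ↥T, (fun i => psiAux p s ((v : Fin n → ZMod p) i)) ∈ C := fun v => v.2
  let g : ↥T → ↥(LinearMap.ker f) := fun v =>
    ⟨⟨fun i => psiAux p s ((v : Fin n → ZMod p) i), hgmem v⟩, by
      refine LinearMap.mem_ker.mpr ?_
      show (p : R) • (fun i => psiAux p s ((v : Fin n → ZMod p) i)) = 0
      funext i
      simp only [Pi.smul_apply, smul_eq_mul, Pi.zero_apply]
      exact psi_smul_p s hp _⟩
  have hginj : Function.Injective g := by
    intro v w hvw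
    have h1 : ∀ i, psiAux p s ((v : Fin n → ZMod p) i) = psiAux p s ((w : Fin n → ZMod p) i) :=
      fun i => congrFun (congrArg Subtype.val (congrArg Subtype.val hvw)) i
    exact Subtype.ext (funext fun i => psi_inj s hp (h1 i))
  have hgsurj : Function.Surjective g := by
    rintro ⟨⟨w, hw⟩, hker⟩
    have hker' : (p : R) • w = 0 := by
      exact LinearMap.mem_ker.mp hker
    have hdvd : ∀ i, p ^ s ∣ (w i).val := by
      intro i
      have h0 : (p : R) * w i = 0 := congrFun hker' i
      have h1 : ((p * (w i).val : ℕ) : R) = 0 := by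
        push_cast
        show ((p * (w i).val : ℕ) : ZMod (p ^ (s+1))) = 0
        rw [Nat.cast_mul, ZMod.natCast_zmod_val]
        exact h0
      have h2 : p ^ (s+1) ∣ p * (w i).val := (ZMod.natCast_eq_zero_iff _ _).mp h1
      obtain ⟨k, hk⟩ := h2
      refine ⟨k, ?_⟩
      have hk' : p * (w i).val = p * (p ^ s * k) := by rw [hk]; ring
      exact Nat.eq_of_mul_eq_mul_left hp.pos hk'
    have hlt : ∀ i, (w i).val / p ^ s < p := by
      intro i
      rw [Nat.div_lt_iff_lt_mul (Nat.pow_pos hp.pos)]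
      exact lt_of_lt_of_eq (ZMod.val_lt (w i)) ((pow_succ p s).trans (mul_comm _ _))
    refine ⟨⟨fun i => (((w i).val / p ^ s : ℕ) : ZMod p), ?_⟩, ?_⟩
    · show (fun i => psiAux p s _) ∈ C
      have heq : (fun i => psiAux p s (((((w i).val / p ^ s : ℕ) : ZMod p)))) = w := by
        funext i
        unfold psiAux
        rw [ZMod.val_cast_of_lt (hlt i), Nat.mul_div_cancel' (hdvd i)]
        rw [ZMod.natCast_val, ZMod.cast_id]
      rw [heq]; exact hw
    · apply Subtype.ext
      apply Subtype.ext
      funext i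
      show psiAux p s _ = w i
      unfold psiAux
      rw [ZMod.val_cast_of_lt (hlt i), Nat.mul_div_cancel' (hdvd i)]
      rw [ZMod.natCast_val, ZMod.cast_id]
  -- cardinalities
  haveI : Finite M := by
    rw [hM]; infer_instance
  have hcardT : Nat.card ↥(LinearMap.ker f) = Nat.card ↥T :=
    (Nat.card_congr (Equiv.ofBijective g ⟨hginj, hgsurj⟩)).symm
  have hcardC : Nat.card ↥C = Nat.card ↥T * Nat.card ↥pC := by
    have h1 := Submodule.card_eq_card_quotient_mul_card (LinearMap.ker f)
    have h2 : Nat.card (↥C ⧸ LinearMap.ker f) = Nat.card ↥pC := by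
      rw [Nat.card_congr f.quotKerEquivRange.toEquiv]
      congr 1
      rw [hf, LinearMap.range_comp, Submodule.range_subtype]
    rw [h1, h2, hcardT]
  -- minimal spanning set
  set G : Set ℕ := {m | ∃ sf : Finset M, sf.card = m ∧ Submodule.span R (↑sf : Set M) = C}
    with hG
  have hGne : G.Nonempty :=
    ⟨(Set.toFinite (C : Set M)).toFinset.card, (Set.toFinite (C : Set M)).toFinset, rfl, by
      rw [Set.Finite.coe_toFinset]; exact Submodule.span_eq C⟩
  have hcrk : codeRank C = sInf G := rfl
  obtain ⟨sF, hcard, hspan⟩ : codeRank C ∈ G := by rw [hcrk]; exact Nat.sInf_mem hGne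
  set K' := codeRank C with hK'
  let e : ↥sF ≃ Fin K' := sF.equivFin.trans (finCongr hcard)
  let c : Fin K' → M := fun i => ↑(e.symm i)
  have hcmem : ∀ i, c i ∈ sF := fun i => (e.symm i).2
  have hcinj : Function.Injective c := fun i j h =>
    e.symm.injective (Subtype.ext h)
  have hcC : ∀ i, c i ∈ C := fun i => by
    rw [← hspan]; exact Submodule.subset_span (hcmem i)
  -- the injection
  let Φ : (Fin K' → ZMod p) × ↥pC → ↥C := fun ay =>
    ⟨(∑ i, ((ay.1 i).val : R) • c i) + ↑ay.2,
      add_mem (Submodule.sum_mem _ fun i _ => C.smul_mem _ (hcC i)) (hpCle ay.2.2)⟩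
  have hΦinj : Function.Injective Φ := by
    rintro ⟨a, y⟩ ⟨a', y'⟩ hΦ
    have h : (∑ i, ((a i).val : R) • c i) + ↑y = (∑ i, ((a' i).val : R) • c i) + ↑y' :=
      Subtype.ext_iff.mp hΦ
    have ha : a = a' := by
      by_contra hne
      obtain ⟨j, hj⟩ := Function.ne_iff.mp hne
      have hK'pos : 0 < K' := lt_of_le_of_lt (Nat.zero_le _) j.isLt
      choose z hz using fun i => coeff_dec s hp (a i) (a' i)
      set d : Fin K' → ZMod p := fun i => a i - a' i with hd
      have h1 : ∀ i, ((d i).val : R) = ((a i).val : R) - ((a' i).val : R) - p * z i :=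
        fun i => by linear_combination -(hz i)
      have hsum : ∑ i, ((d i).val : R) • c i
          = (((y' : M) - y) - (p : R) • ∑ i, z i • c i) := by
        have hsub : (∑ i, ((a i).val : R) • c i) - (∑ i, ((a' i).val : R) • c i)
            = (y' : M) - y := by
          rw [sub_eq_sub_iff_add_eq_add]
          exact h.trans (add_comm _ _)
        calc ∑ i, ((d i).val : R) • c i
            = ∑ i, ((((a i).val : R) - ((a' i).val : R) - p * z i) • c i) :=
              Finset.sum_congr rfl fun i _ => by rw [h1 i]
          _ = (∑ i, (((a i).val : R) • c i - ((a' i).val : R) • c i))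
              - ∑ i, ((p : R) * z i) • c i := by
              rw [← Finset.sum_sub_distrib]
              exact Finset.sum_congr rfl fun i _ => by rw [sub_smul, sub_smul]
          _ = ((∑ i, ((a i).val : R) • c i) - (∑ i, ((a' i).val : R) • c i))
              - (p : R) • ∑ i, z i • c i := by
              rw [Finset.sum_sub_distrib, Finset.smul_sum]
              congr 1
              exact Finset.sum_congr rfl fun i _ => by rw [mul_smul]
          _ = ((y' : M) - y) - (p : R) • ∑ i, z i • c i := by rw [hsub]
      have hPmem : ∑ i, ((d i).val : R) • c i ∈ pC := by
        rw [hsum]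
        refine sub_mem (sub_mem y'.2 y.2) ?_
        exact Submodule.mem_map.mpr ⟨∑ i, z i • c i,
          Submodule.sum_mem _ fun i _ => C.smul_mem _ (hcC i), rfl⟩
      set N : Submodule R M := Submodule.span R ((sF.erase (c j) : Finset M) : Set M) with hN
      have hFj : ((d j).val : R) • c j ∈ N ⊔ pC := by
        have hsplit : ((d j).val : R) • c j
            = (∑ i, ((d i).val : R) • c i) - ∑ i ∈ Finset.univ.erase j, ((d i).val : R) • c i := by
          rw [← Finset.add_sum_erase _ _ (Finset.mem_univ j)]
          abel
        rw [hsplit]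
        refine sub_mem (Submodule.mem_sup_right hPmem) (Submodule.mem_sup_left ?_)
        refine Submodule.sum_mem _ fun i hi => Submodule.smul_mem _ _ ?_
        refine Submodule.subset_span ?_
        have hij : i ≠ j := (Finset.mem_erase.mp hi).1
        exact Finset.mem_coe.mpr (Finset.mem_erase.mpr ⟨fun hceq => hij (hcinj hceq), hcmem i⟩)
      have hu : IsUnit ((d j).val : R) := by
        rw [ZMod.isUnit_iff_coprime]
        have hdj : d j ≠ 0 := sub_ne_zero.mpr hj
        have hvne : (d j).val ≠ 0 := fun h0 => hdj ((ZMod.val_eq_zero _).mp h0)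
        have hndvd : ¬ p ∣ (d j).val := fun hdvd =>
          absurd (Nat.le_of_dvd (Nat.pos_of_ne_zero hvne) hdvd) (not_le.mpr (ZMod.val_lt (d j)))
        exact Nat.Coprime.pow_right _ ((hp.coprime_iff_not_dvd.mpr hndvd).symm)
      have hcj : c j ∈ N ⊔ pC := by
        have hmem := Submodule.smul_mem _ (↑hu.unit⁻¹ : R) hFj
        have h1 : (↑hu.unit⁻¹ : R) * ((d j).val : R) = 1 := hu.val_inv_mul
        rwa [smul_smul, h1, one_smul] at hmem
      have hCle : C ≤ N ⊔ pC := by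
        rw [← hspan, Submodule.span_le]
        intro x hx
        by_cases hx' : x = c j
        · subst hx'; exact hcj
        · refine Submodule.mem_sup_left (Submodule.subset_span ?_)
          exact Finset.mem_coe.mpr (Finset.mem_erase.mpr ⟨hx', Finset.mem_coe.mp hx⟩)
      have hNC : N ≤ C := by
        rw [← hspan]
        exact Submodule.span_mono (Finset.coe_subset.mpr (Finset.erase_subset _ _))
      have hCN : C ≤ N := by
        refine nak (p : R) (s+1) ?_ C N hNC hCle
        rw [← Nat.cast_pow, ZMod.natCast_self]
      have hle : codeRank C ≤ (sF.erase (c j)).card :=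
        Nat.sInf_le ⟨sF.erase (c j), rfl, le_antisymm hNC hCN⟩
      rw [Finset.card_erase_of_mem (hcmem j), hcard] at hle
      omega
    subst ha
    have hy : (y : M) = y' := add_left_cancel h
    exact Prod.ext rfl (Subtype.ext hy)
  -- counting
  have hcount := Nat.card_le_card_of_injective Φ hΦinj
  rw [Nat.card_prod, Nat.card_fun, Nat.card_zmod, Nat.card_eq_fintype_card (α := Fin K'),
    Fintype.card_fin, hcardC] at hcount
  haveI : Nonempty ↥pC := ⟨⟨0, pC.zero_mem⟩⟩
  have hpCpos : 0 < Nat.card ↥pC := Nat.card_pos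
  have hpow : p ^ K' ≤ Nat.card ↥T := by
    have := Nat.le_of_mul_le_mul_right (by
      calc p ^ K' * Nat.card ↥pC ≤ Nat.card ↥T * Nat.card ↥pC := hcount) hpCpos
    exact this
  have hTcard : Nat.card ↥T = p ^ Module.finrank (ZMod p) ↥T := by
    letI : Fintype ↥T := Fintype.ofFinite _
    rw [Nat.card_eq_fintype_card]
    rw [Module.card_eq_pow_finrank (K := ZMod p) (V := ↥T), ZMod.card]
  rw [hTcard] at hpow
  exact (Nat.pow_le_pow_iff_right hp.one_lt).mp hpow

lemma key_bound (p s n K : ℕ) (hp : p.Prime) (hK : 1 ≤ K)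
    (C : Submodule (ZMod (p ^ (s+1))) (Fin n → ZMod (p ^ (s+1))))
    (hC : codeRank C = K) : minLee C ≤ p ^ s * Phi n K p := by
  classical
  haveI : Fact p.Prime := ⟨hp⟩
  haveI : NeZero p := ⟨hp.ne_zero⟩
  haveI : NeZero (p ^ (s+1)) := ⟨pow_ne_zero _ hp.ne_zero⟩
  set T := torCode p s n hp C with hT
  have hKd : K ≤ Module.finrank (ZMod p) ↥T := hC ▸ codeRank_le_finrank_tor p s n hp C
  let b := Module.finBasis (ZMod p) ↥T
  let v : Fin K → (Fin n → ZMod p) := fun i => ↑(b (Fin.castLE hKd i))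
  have hvT : ∀ i, v i ∈ T := fun i => (b (Fin.castLE hKd i)).2
  have hli : LinearIndependent (ZMod p) v := by
    have h1 : LinearIndependent (ZMod p) (fun i => ((b i : Fin n → ZMod p))) :=
      b.linearIndependent.map' T.subtype (Submodule.ker_subtype T)
    exact h1.comp (Fin.castLE hKd) (Fin.castLE_injective hKd)
  set T' := Submodule.span (ZMod p) (Set.range v) with hT'
  have hrank' : Module.finrank (ZMod p) ↥T' = K := by
    rw [finrank_span_eq_card hli, Fintype.card_fin]
  have hT'le : T' ≤ T := Submodule.span_le.mpr (Set.range_subset_iff.mpr hvT)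
  have hT'ne : T' ≠ ⊥ := by
    intro hbot
    rw [hbot, finrank_bot] at hrank'
    omega
  obtain ⟨x0, hx0T, hx0ne⟩ := (Submodule.ne_bot_iff T').mp hT'ne
  have hS'ne : {w | ∃ x ∈ T', x ≠ 0 ∧ leeWtVec x = w}.Nonempty :=
    ⟨leeWtVec x0, x0, hx0T, hx0ne, rfl⟩
  obtain ⟨v0, hv0T', hv0ne, hv0w⟩ := Nat.sInf_mem hS'ne
  have hmt : minLee T' = leeWtVec v0 := hv0w.symm
  set w0 : Fin n → ZMod (p ^ (s+1)) := fun i => psiAux p s (v0 i) with hw0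
  have hw0C : w0 ∈ C := hT'le hv0T'
  have hw0ne : w0 ≠ 0 := by
    intro h0
    apply hv0ne
    funext i
    exact psi_inj s hp ((congrFun h0 i).trans (psi_zero s hp).symm)
  have hw0lee : leeWtVec w0 = p ^ s * leeWtVec v0 := by
    unfold leeWtVec
    rw [Finset.mul_sum]
    exact Finset.sum_congr rfl fun i _ => psi_lee s hp _
  have h5 : minLee C ≤ p ^ s * minLee T' := by
    have h51 : minLee C ≤ leeWtVec w0 := Nat.sInf_le ⟨w0, hw0C, hw0ne, rfl⟩
    rw [hw0lee] at h51
    rw [hmt]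
    exact h51
  have hbdd : BddAbove {d | ∃ C' : Submodule (ZMod p) (Fin n → ZMod p),
      Module.finrank (ZMod p) ↥C' = K ∧ minLee C' = d} := by
    refine ⟨n * p, ?_⟩
    rintro d ⟨C', hr, rfl⟩
    have hC'ne : C' ≠ ⊥ := by
      intro hbot
      rw [hbot, finrank_bot] at hr
      omega
    obtain ⟨x, hxC, hxne⟩ := (Submodule.ne_bot_iff C').mp hC'ne
    have h1 : minLee C' ≤ leeWtVec x := Nat.sInf_le ⟨x, hxC, hxne, rfl⟩
    refine h1.trans ?_
    unfold leeWtVec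
    calc ∑ i, leeWt (x i) ≤ ∑ _i : Fin n, p :=
          Finset.sum_le_sum fun i _ => le_trans (min_le_left _ _) (le_of_lt (ZMod.val_lt _))
      _ = n * p := by rw [Finset.sum_const, Finset.card_univ, Fintype.card_fin, smul_eq_mul]
  have h6 : minLee T' ≤ Phi n K p := le_csSup hbdd ⟨T', hrank', rfl⟩
  calc minLee C ≤ p ^ s * minLee T' := h5
    _ ≤ p ^ s * Phi n K p := Nat.mul_le_mul_left _ h6

theorem phiR_le_pow_mul_phi (p t n K : ℕ) (hp : p.Prime) (ht : 1 ≤ t)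
    (hK : 1 ≤ K) (hKn : K ≤ n) :
    PhiR n K (p ^ t) ≤ p ^ (t - 1) * Phi n K p := by
  obtain ⟨s, rfl⟩ : ∃ s, t = s + 1 := ⟨t - 1, by omega⟩
  have hts : (s + 1) - 1 = s := rfl
  rw [hts]
  unfold PhiR
  rcases Set.eq_empty_or_nonempty {d | ∃ C : Submodule (ZMod (p ^ (s+1)))
      (Fin n → ZMod (p ^ (s+1))), codeRank C = K ∧ minLee C = d} with hemp | hne
  · rw [hemp, csSup_empty]
    exact Nat.zero_le _
  · refine csSup_le hne ?_
    rintro d ⟨C, hCrank, rfl⟩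
    exact key_bound p s n K hp hK C hCrank
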